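/- For every positive integer m, the number of index-m subgroups of ℤ × ℤ that are contained in none of Λ₁, Λ₂, Λ₃ equals σ(m) − 3σ(m/2) + 2σ(m/4) (with σ(m/2) = 0 if m is odd and σ(m/4) = 0 if 4 does not divide m). -/

import Mathlib

/-- `Λ₁ = {(x,y) ∈ ℤ × ℤ : y is even}`. -/
def Lambda1 : AddSubgroup (ℤ × ℤ) where
  carrier := {p : ℤ × ℤ | 2 ∣ p.2}
  zero_mem' := dvd_zero 2
  add_mem' := fun ha hb => dvd_add ha hb
  neg_mem' := fun ha => dvd_neg.mpr ha

/-- `Λ₂ = {(x,y) ∈ ℤ × ℤ : x is even}`. -/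
def Lambda2 : AddSubgroup (ℤ × ℤ) where
  carrier := {p : ℤ × ℤ | 2 ∣ p.1}
  zero_mem' := dvd_zero 2
  add_mem' := fun ha hb => dvd_add ha hb
  neg_mem' := fun ha => dvd_neg.mpr ha

/-- `Λ₃ = {(x,y) ∈ ℤ × ℤ : x ≡ y (mod 2)}`. -/
def Lambda3 : AddSubgroup (ℤ × ℤ) where
  carrier := {p : ℤ × ℤ | p.1 ≡ p.2 [ZMOD 2]}
  zero_mem' := Int.ModEq.refl 0
  add_mem' := fun ha hb => Int.ModEq.add ha hb
  neg_mem' := fun ha => Int.ModEq.neg ha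

/-- The three index-2 subgroups, indexed by `Fin 3`. -/
def L : Fin 3 → AddSubgroup (ℤ × ℤ) := ![Lambda1, Lambda2, Lambda3]

section Aux

open Finset

/-! ### The subgroups `Hsub a b d` -/

def Hsub (a b d : ℤ) : AddSubgroup (ℤ × ℤ) where
  carrier := {p : ℤ × ℤ | ∃ s t : ℤ, p = (s * a, s * b + t * d)}
  zero_mem' := ⟨0, 0, by simp [Prod.ext_iff]⟩
  add_mem' := by
    rintro p q ⟨s, t, rfl⟩ ⟨s', t', rfl⟩
    exact ⟨s + s', t + t', by simp [Prod.ext_iff]; constructor <;> ring⟩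
  neg_mem' := by
    rintro p ⟨s, t, rfl⟩
    exact ⟨-s, -t, by simp [Prod.ext_iff]; ring⟩

lemma mem_Hsub {a b d : ℤ} {p : ℤ × ℤ} :
    p ∈ Hsub a b d ↔ ∃ s t : ℤ, p = (s * a, s * b + t * d) := Iff.rfl

lemma ab_mem_Hsub (a b d : ℤ) : (a, b) ∈ Hsub a b d := ⟨1, 0, by simp⟩
lemma zd_mem_Hsub (a b d : ℤ) : ((0 : ℤ), d) ∈ Hsub a b d := ⟨0, 1, by simp⟩

/-! ### Index of `Hsub` -/

lemma index_ker_of_surjective {A C : Type*} [AddGroup A] [AddGroup C] (f : A →+ C)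
    (hf : Function.Surjective f) : f.ker.index = Nat.card C := by
  rw [AddSubgroup.index_ker, AddMonoidHom.range_eq_top.mpr hf]
  exact Nat.card_congr AddSubgroup.topEquiv.toEquiv

def fstZMod (a : ℕ) : (ℤ × ℤ) →+ ZMod a :=
  (Int.castAddHom (ZMod a)).comp (AddMonoidHom.fst ℤ ℤ)

lemma fstZMod_surjective (a : ℕ) : Function.Surjective (fstZMod a) := fun x => by
  obtain ⟨k, hk⟩ := ZMod.intCast_surjective (n := a) x
  exact ⟨(k, 0), hk⟩

lemma mem_ker_fstZMod {a : ℕ} {p : ℤ × ℤ} : p ∈ (fstZMod a).ker ↔ (a : ℤ) ∣ p.1 := by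
  rw [AddMonoidHom.mem_ker]
  exact ZMod.intCast_zmod_eq_zero_iff_dvd _ _

lemma Hsub_index (a d : ℕ) (b : ℤ) (ha : 0 < a) (hd : 0 < d) :
    (Hsub a b d).index = a * d := by
  have ha' : (a : ℤ) ≠ 0 := Int.natCast_ne_zero.mpr ha.ne'
  set B := (fstZMod a).ker with hBdef
  have key : ∀ p : ℤ × ℤ, p ∈ B ↔ (a : ℤ) ∣ p.1 := fun p => mem_ker_fstZMod
  have hle : Hsub a b d ≤ B := by
    rintro p ⟨s, t, rfl⟩
    exact (key _).mpr ⟨s, mul_comm _ _⟩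
  have hBidx : B.index = a := by
    rw [hBdef, index_ker_of_surjective _ (fstZMod_surjective a), Nat.card_zmod]
  let h0 : (ℤ × ℤ) →+ (ℤ × ℤ) :=
    { toFun := fun p => (p.1 * a, p.2)
      map_zero' := by simp
      map_add' := fun p q => by simp [Prod.ext_iff]; ring }
  let g : (ℤ × ℤ) →+ B := h0.codRestrict B (fun p => (key _).mpr ⟨p.1, mul_comm _ _⟩)
  have hgbij : Function.Bijective g := by
    constructor
    · intro p q hpq
      have h1 : p.1 * a = q.1 * a ∧ p.2 = q.2 := by
        simpa [g, h0, Subtype.ext_iff, Prod.ext_iff] using hpq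
      exact Prod.ext (mul_right_cancel₀ ha' h1.1) h1.2
    · rintro ⟨p, hp⟩
      obtain ⟨s, hs⟩ := (key p).mp hp
      refine ⟨(s, p.2), ?_⟩
      simp only [g, h0, AddMonoidHom.codRestrict_apply, Subtype.ext_iff, AddMonoidHom.coe_mk,
        ZeroHom.coe_mk]
      exact Prod.ext (by rw [hs, mul_comm]) rfl
  let g2 : (ℤ × ℤ) →+ ZMod d :=
    (Int.castAddHom (ZMod d)).comp
      { toFun := fun p => p.2 - p.1 * b
        map_zero' := by simp
        map_add' := fun p q => by simp; ring }
  have hrel : (Hsub a b d).relIndex B = d := by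
    rw [AddSubgroup.relIndex]
    rw [← AddSubgroup.index_comap_of_surjective _ hgbij.2]
    have hcomap : (((Hsub a b d).addSubgroupOf B).comap g) = g2.ker := by
      ext p
      simp only [AddSubgroup.mem_comap, AddSubgroup.mem_addSubgroupOf, AddMonoidHom.mem_ker]
      have he : ((g p : B) : ℤ × ℤ) = (p.1 * a, p.2) := rfl
      rw [he]
      constructor
      · rintro ⟨s, t, hst⟩
        simp only [Prod.mk.injEq] at hst
        have hs : s = p.1 := (mul_right_cancel₀ ha' hst.1).symm
        have : p.2 - p.1 * b = t * d := by
          rw [hst.2, hs]; ring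
        show ((p.2 - p.1 * b : ℤ) : ZMod d) = 0
        rw [this]
        simp [ZMod.intCast_zmod_eq_zero_iff_dvd]
      · intro hp
        have : (d : ℤ) ∣ p.2 - p.1 * b := by
          rw [← ZMod.intCast_zmod_eq_zero_iff_dvd]
          exact hp
        obtain ⟨t, ht⟩ := this
        refine ⟨p.1, t, ?_⟩
        simp only [Prod.mk.injEq]
        exact ⟨trivial, by linarith⟩
    rw [hcomap, index_ker_of_surjective, Nat.card_zmod]
    intro z
    obtain ⟨k, hk⟩ := ZMod.intCast_surjective (n := d) z
    exact ⟨(0, k), by simp [g2, hk]⟩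
  have := AddSubgroup.relIndex_mul_index hle
  rw [hrel, hBidx] at this
  rw [← this, mul_comm]

/-! ### Classification -/

lemma int_subgroup (D : AddSubgroup ℤ) (hD : D.index ≠ 0) :
    ∃ d : ℕ, 0 < d ∧ ∀ y : ℤ, y ∈ D ↔ (d : ℤ) ∣ y := by
  obtain ⟨c, hc⟩ := Int.subgroup_cyclic D
  rw [← AddSubgroup.zmultiples_eq_closure] at hc
  have hc0 : c ≠ 0 := by
    rintro rfl
    rw [hc] at hD
    apply hD
    have : AddSubgroup.zmultiples (0 : ℤ) = ⊥ := by
      ext x; simp [Int.mem_zmultiples_iff]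
    rw [this, AddSubgroup.index_bot, Nat.card_eq_zero_of_infinite]
  refine ⟨c.natAbs, Int.natAbs_pos.mpr hc0, fun y => ?_⟩
  rw [hc, Int.mem_zmultiples_iff, Int.natAbs_dvd]

lemma classify (m : ℕ) (hm : 0 < m) (Λ : AddSubgroup (ℤ × ℤ)) (hΛ : Λ.index = m) :
    ∃ a d : ℕ, ∃ b : ℤ, 0 < a ∧ 0 < d ∧ 0 ≤ b ∧ b < d ∧ Λ = Hsub a b d := by
  have hm0 : Λ.index ≠ 0 := by rw [hΛ]; exact hm.ne'
  set D : AddSubgroup ℤ := Λ.comap (AddMonoidHom.inr ℤ ℤ) with hDdef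
  have hDmem : ∀ y : ℤ, y ∈ D ↔ ((0 : ℤ), y) ∈ Λ := fun y => Iff.rfl
  have hDidx : D.index ≠ 0 := by
    intro h0
    have h1 : D.index = Λ.relIndex (AddMonoidHom.inr ℤ ℤ).range := AddSubgroup.index_comap Λ _
    have h2 : Λ.relIndex (AddMonoidHom.inr ℤ ℤ).range ∣ Λ.index :=
      AddSubgroup.relIndex_dvd_index_of_normal Λ _
    rw [← h1, h0] at h2
    exact hm0 (Nat.eq_zero_of_zero_dvd h2)
  obtain ⟨d, hd, hDiff⟩ := int_subgroup D hDidx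
  set P : AddSubgroup ℤ := Λ.map (AddMonoidHom.fst ℤ ℤ) with hPdef
  have hPidx : P.index ≠ 0 := by
    intro h0
    have hle : Λ ≤ P.comap (AddMonoidHom.fst ℤ ℤ) := fun p hp => by
      exact AddSubgroup.mem_comap.mpr (AddSubgroup.mem_map.mpr ⟨p, hp, rfl⟩)
    have h1 : (P.comap (AddMonoidHom.fst ℤ ℤ)).index ∣ Λ.index :=
      AddSubgroup.index_dvd_of_le hle
    have h2 : (P.comap (AddMonoidHom.fst ℤ ℤ)).index = P.relIndex (AddMonoidHom.fst ℤ ℤ).range :=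
      AddSubgroup.index_comap P _
    have h3 : (AddMonoidHom.fst ℤ ℤ).range = ⊤ := by
      rw [AddMonoidHom.range_eq_top]
      exact fun x => ⟨(x, 0), rfl⟩
    rw [h2, h3, AddSubgroup.relIndex_top_right, h0] at h1
    exact hm0 (Nat.eq_zero_of_zero_dvd h1)
  obtain ⟨a, ha, hPiff⟩ := int_subgroup P hPidx
  have haP : (a : ℤ) ∈ P := (hPiff a).mpr dvd_rfl
  obtain ⟨p₀, hp₀, hp₀1⟩ := AddSubgroup.mem_map.mp haP
  have hdD : ((0 : ℤ), (d : ℤ)) ∈ Λ := (hDmem d).mp ((hDiff d).mpr dvd_rfl)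
  set b : ℤ := p₀.2 % d with hbdef
  have hd' : (0 : ℤ) < d := by exact_mod_cast hd
  have hb0 : 0 ≤ b := Int.emod_nonneg _ hd'.ne'
  have hbd : b < d := Int.emod_lt_of_pos _ hd'
  refine ⟨a, d, b, ha, hd, hb0, hbd, ?_⟩
  have habΛ : ((a : ℤ), b) ∈ Λ := by
    have : ((a : ℤ), b) = p₀ - (p₀.2 / d) • ((0 : ℤ), (d : ℤ)) := by
      have : b = p₀.2 - d * (p₀.2 / d) := Int.emod_def _ _
      rw [Prod.ext_iff]
      constructor
      · simp [hp₀1.symm]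
      · simp only [Prod.smul_snd, Prod.snd_sub, smul_eq_mul]
        rw [this]; ring
    rw [this]
    exact AddSubgroup.sub_mem Λ hp₀ (AddSubgroup.zsmul_mem Λ hdD _)
  ext p
  constructor
  · intro hp
    have h1 : (a : ℤ) ∣ p.1 := (hPiff p.1).mp (AddSubgroup.mem_map.mpr ⟨p, hp, rfl⟩)
    obtain ⟨s, hs⟩ := h1
    have h2 : p - s • ((a : ℤ), b) ∈ Λ := AddSubgroup.sub_mem Λ hp (AddSubgroup.zsmul_mem Λ habΛ _)
    have h3 : p - s • ((a : ℤ), b) = ((0 : ℤ), p.2 - s * b) := by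
      rw [Prod.ext_iff]
      constructor
      · simp [hs, mul_comm]
      · simp [smul_eq_mul]
    rw [h3] at h2
    obtain ⟨t, ht⟩ := (hDiff _).mp ((hDmem _).mpr h2)
    refine ⟨s, t, ?_⟩
    rw [Prod.ext_iff]
    refine ⟨by simpa [mul_comm] using hs, ?_⟩
    show p.2 = s * b + t * d
    linear_combination ht
  · rintro ⟨s, t, rfl⟩
    have : ((s * a : ℤ), s * b + t * d) = s • ((a : ℤ), b) + t • ((0 : ℤ), (d : ℤ)) := by
      rw [Prod.ext_iff]; constructor <;> simp [smul_eq_mul]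
    rw [this]
    exact AddSubgroup.add_mem Λ (AddSubgroup.zsmul_mem Λ habΛ _) (AddSubgroup.zsmul_mem Λ hdD _)

/-! ### Injectivity -/

lemma Hsub_inj {a a' d d' : ℕ} {b b' : ℤ} (ha : 0 < a) (ha' : 0 < a')
    (hd : 0 < d) (hd' : 0 < d') (hb0 : 0 ≤ b) (hbd : b < d) (hb0' : 0 ≤ b') (hbd' : b' < d')
    (h : Hsub a b d = Hsub a' b' d') : a = a' ∧ b = b' ∧ d = d' := by
  have h1 : ((a : ℤ), b) ∈ Hsub a' b' d' := h ▸ ab_mem_Hsub a b d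
  have h2 : ((a' : ℤ), b') ∈ Hsub a b d := h ▸ ab_mem_Hsub a' b' d'
  have h3 : ((0 : ℤ), (d : ℤ)) ∈ Hsub a' b' d' := h ▸ zd_mem_Hsub a b d
  have h4 : ((0 : ℤ), (d' : ℤ)) ∈ Hsub a b d := h ▸ zd_mem_Hsub a' b' d'
  obtain ⟨s1, t1, hst1⟩ := h1
  obtain ⟨s2, t2, hst2⟩ := h2
  obtain ⟨s3, t3, hst3⟩ := h3
  obtain ⟨s4, t4, hst4⟩ := h4
  simp only [Prod.mk.injEq] at hst1 hst2 hst3 hst4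
  have hApos : (0 : ℤ) < a := by exact_mod_cast ha
  have hA'pos : (0 : ℤ) < a' := by exact_mod_cast ha'
  have hs3 : s3 = 0 := by
    rcases mul_eq_zero.mp hst3.1.symm with h'' | h''
    · exact h''
    · exact absurd h'' hA'pos.ne'
  have hs4 : s4 = 0 := by
    rcases mul_eq_zero.mp hst4.1.symm with h'' | h''
    · exact h''
    · exact absurd h'' hApos.ne'
  simp only [hs3, zero_mul, zero_add] at hst3
  simp only [hs4, zero_mul, zero_add] at hst4
  have hdd' : (d' : ℤ) ∣ (d : ℤ) := ⟨t3, by linear_combination hst3.2⟩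
  have hd'd : (d : ℤ) ∣ (d' : ℤ) := ⟨t4, by linear_combination hst4.2⟩
  have hdd : d = d' := by
    have := Int.dvd_antisymm (by positivity) (by positivity) hd'd hdd'
    exact_mod_cast this
  have hs1 : 1 ≤ s1 := by nlinarith [hst1.1]
  have hs2 : 1 ≤ s2 := by nlinarith [hst2.1]
  have haa : (a : ℤ) = a' := by nlinarith [hst1.1, hst2.1]
  have haa' : a = a' := by exact_mod_cast haa
  have hs1' : s1 = 1 := by
    have h9 := hst1.1
    rw [← haa] at h9
    have h5 : (a : ℤ) * (s1 - 1) = 0 := by linear_combination -h9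
    rcases mul_eq_zero.mp h5 with h'' | h''
    · exact absurd h'' hApos.ne'
    · linarith
  simp only [hs1', one_mul] at hst1
  have hcast : (d : ℤ) = (d' : ℤ) := by exact_mod_cast hdd
  have hbb : b = b' := by
    have hdvd : (d' : ℤ) ∣ b - b' := ⟨t1, by linear_combination hst1.2⟩
    have habs : |b - b'| < (d' : ℤ) := by
      rw [abs_lt]
      constructor <;> [linarith; linarith]
    have := Int.eq_zero_of_abs_lt_dvd hdvd habs
    linarith
  exact ⟨haa', hbb, hdd⟩

/-! ### Containment conditions -/

lemma mem_Lambda1 {p : ℤ × ℤ} : p ∈ Lambda1 ↔ 2 ∣ p.2 := Iff.rfl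
lemma mem_Lambda2 {p : ℤ × ℤ} : p ∈ Lambda2 ↔ 2 ∣ p.1 := Iff.rfl
lemma mem_Lambda3 {p : ℤ × ℤ} : p ∈ Lambda3 ↔ (2 : ℤ) ∣ p.2 - p.1 :=
  Int.modEq_iff_dvd

lemma cond_iff (a b d : ℤ) :
    (∀ i : Fin 3, ¬ Hsub a b d ≤ L i) ↔ (¬ 2 ∣ a ∧ ¬ 2 ∣ d) := by
  have le1 : Hsub a b d ≤ Lambda1 ↔ (2 ∣ b ∧ 2 ∣ d) := by
    constructor
    · intro h
      exact ⟨mem_Lambda1.mp (h (ab_mem_Hsub a b d)), mem_Lambda1.mp (h (zd_mem_Hsub a b d))⟩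
    · rintro ⟨hb, hd⟩ p ⟨s, t, rfl⟩
      exact mem_Lambda1.mpr (dvd_add (Dvd.dvd.mul_left hb s) (Dvd.dvd.mul_left hd t))
  have le2 : Hsub a b d ≤ Lambda2 ↔ 2 ∣ a := by
    constructor
    · intro h
      exact mem_Lambda2.mp (h (ab_mem_Hsub a b d))
    · rintro ha p ⟨s, t, rfl⟩
      exact mem_Lambda2.mpr (Dvd.dvd.mul_left ha s)
  have le3 : Hsub a b d ≤ Lambda3 ↔ ((2 : ℤ) ∣ b - a ∧ 2 ∣ d) := by
    constructor
    · intro h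
      refine ⟨mem_Lambda3.mp (h (ab_mem_Hsub a b d)), ?_⟩
      have := mem_Lambda3.mp (h (zd_mem_Hsub a b d))
      simpa using this
    · rintro ⟨hba, hd⟩ p ⟨s, t, rfl⟩
      refine mem_Lambda3.mpr ?_
      have : s * b + t * d - s * a = s * (b - a) + t * d := by ring
      rw [this]
      exact dvd_add (Dvd.dvd.mul_left hba s) (Dvd.dvd.mul_left hd t)
  constructor
  · intro h
    have h0 := h 0; have h1 := h 1; have h2 := h 2
    rw [show L 0 = Lambda1 from rfl, le1] at h0
    rw [show L 1 = Lambda2 from rfl, le2] at h1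
    rw [show L 2 = Lambda3 from rfl, le3] at h2
    refine ⟨h1, fun hd => ?_⟩
    rcases Int.even_or_odd b with hb | hb
    · exact h0 ⟨hb.two_dvd, hd⟩
    · refine h2 ⟨?_, hd⟩
      have ha : ¬ 2 ∣ a := h1
      omega
  · rintro ⟨ha, hd⟩ i
    fin_cases i
    · show ¬ Hsub a b d ≤ Lambda1
      rw [le1]; omega
    · show ¬ Hsub a b d ≤ Lambda2
      rw [le2]; exact ha
    · show ¬ Hsub a b d ≤ Lambda3
      rw [le3]; omega

/-! ### Divisor-sum arithmetic -/

def σz (n : ℕ) : ℤ := ∑ d ∈ n.divisors, (d : ℤ)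
def Oz (n : ℕ) : ℤ := ∑ d ∈ n.divisors.filter (fun d => ¬ 2 ∣ d), (d : ℤ)

lemma divisors_two_mul (n : ℕ) (hn : n ≠ 0) :
    (2 * n).divisors
      = (n.divisors.filter fun d => ¬ 2 ∣ d) ∪ n.divisors.image (fun e => 2 * e) := by
  ext d
  simp only [Nat.mem_divisors, mem_union, mem_filter, mem_image]
  constructor
  · rintro ⟨hdvd, h2n⟩
    by_cases h2 : 2 ∣ d
    · obtain ⟨e, rfl⟩ := h2
      right
      exact ⟨e, ⟨(mul_dvd_mul_iff_left (two_ne_zero)).mp hdvd, hn⟩, rfl⟩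
    · left
      refine ⟨⟨?_, hn⟩, h2⟩
      have hcop : Nat.Coprime d 2 :=
        Nat.coprime_comm.mp ((Nat.Prime.coprime_iff_not_dvd Nat.prime_two).mpr h2)
      exact hcop.dvd_of_dvd_mul_left hdvd
  · rintro (⟨⟨hdvd, _⟩, _⟩ | ⟨e, ⟨hdvd, _⟩, rfl⟩)
    · exact ⟨hdvd.mul_left 2, mul_ne_zero two_ne_zero hn⟩
    · exact ⟨mul_dvd_mul_left 2 hdvd, mul_ne_zero two_ne_zero hn⟩

lemma sigma_two_mul (n : ℕ) (hn : n ≠ 0) : σz (2 * n) = Oz n + 2 * σz n := by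
  have hdisj : Disjoint (n.divisors.filter fun d => ¬ 2 ∣ d)
      (n.divisors.image (fun e => 2 * e)) := by
    rw [disjoint_left]
    rintro d hd1 hd2
    simp only [mem_filter] at hd1
    simp only [mem_image] at hd2
    obtain ⟨e, _, rfl⟩ := hd2
    exact hd1.2 ⟨e, rfl⟩
  have hinj : ∀ x ∈ n.divisors, ∀ y ∈ n.divisors, 2 * x = 2 * y → x = y := by
    intro x _ y _ h; omega
  rw [σz, divisors_two_mul n hn, sum_union hdisj, sum_image hinj, Oz, σz, mul_sum]
  push_cast
  rfl

lemma Oz_two_mul (n : ℕ) (hn : n ≠ 0) : Oz (2 * n) = Oz n := by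
  rw [Oz, Oz]
  congr 1
  ext d
  simp only [mem_filter, Nat.mem_divisors]
  constructor
  · rintro ⟨⟨hdvd, _⟩, h2⟩
    have hcop : Nat.Coprime d 2 :=
      Nat.coprime_comm.mp ((Nat.Prime.coprime_iff_not_dvd Nat.prime_two).mpr h2)
    exact ⟨⟨hcop.dvd_of_dvd_mul_left hdvd, hn⟩, h2⟩
  · rintro ⟨⟨hdvd, _⟩, h2⟩
    exact ⟨⟨hdvd.mul_left 2, mul_ne_zero two_ne_zero hn⟩, h2⟩

lemma Oz_odd (n : ℕ) (hn : ¬ 2 ∣ n) : Oz n = σz n := by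
  rw [Oz, σz, filter_true_of_mem]
  intro d hd
  rw [Nat.mem_divisors] at hd
  intro h2
  exact hn (h2.trans hd.1)

lemma rhs_eval (m : ℕ) (hm : m ≠ 0) :
    σz m - 3 * (if 2 ∣ m then σz (m / 2) else 0) + 2 * (if 4 ∣ m then σz (m / 4) else 0)
      = if 2 ∣ m then 0 else σz m := by
  by_cases h2 : 2 ∣ m
  · obtain ⟨k, rfl⟩ := h2
    have hk : k ≠ 0 := by omega
    have h2' : 2 ∣ 2 * k := Dvd.intro k rfl
    rw [if_pos h2', if_pos h2']
    have hdiv2 : 2 * k / 2 = k := by omega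
    rw [hdiv2]
    by_cases h2k : 2 ∣ k
    · obtain ⟨j, rfl⟩ := h2k
      have hj : j ≠ 0 := by omega
      have h4 : 4 ∣ 2 * (2 * j) := ⟨j, by ring⟩
      rw [if_pos h4]
      have hdiv4 : 2 * (2 * j) / 4 = j := by omega
      rw [hdiv4]
      rw [sigma_two_mul _ (by omega), Oz_two_mul _ hj, sigma_two_mul _ hj]
      ring
    · have h4 : ¬ 4 ∣ 2 * k := by omega
      rw [if_neg h4, sigma_two_mul _ hk, Oz_odd _ h2k]
      ring
  · rw [if_neg h2, if_neg (by omega : ¬ 4 ∣ m), if_neg h2]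
    ring

lemma count_eval (m : ℕ) :
    ∑ p ∈ m.divisorsAntidiagonal.filter (fun p => ¬ 2 ∣ p.1 ∧ ¬ 2 ∣ p.2), ((p.2 : ℤ))
      = if 2 ∣ m then 0 else σz m := by
  rw [sum_filter]
  rw [Nat.sum_divisorsAntidiagonal (f := fun a d => if ¬ 2 ∣ a ∧ ¬ 2 ∣ d then (d : ℤ) else 0)]
  by_cases h2 : 2 ∣ m
  · rw [if_pos h2]
    apply sum_eq_zero
    intro i hi
    rw [Nat.mem_divisors] at hi
    rw [if_neg]
    rintro ⟨hi1, hi2⟩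
    have : m = i * (m / i) := (Nat.mul_div_cancel' hi.1).symm
    rcases (Nat.Prime.dvd_mul Nat.prime_two).mp (this ▸ h2) with h | h
    · exact hi1 h
    · exact hi2 h
  · rw [if_neg h2]
    have : ∀ i ∈ m.divisors, (if ¬ 2 ∣ i ∧ ¬ 2 ∣ (m / i) then ((m / i : ℕ) : ℤ) else 0)
        = ((m / i : ℕ) : ℤ) := by
      intro i hi
      rw [Nat.mem_divisors] at hi
      rw [if_pos]
      constructor
      · exact fun h => h2 (h.trans hi.1)
      · exact fun h => h2 (h.trans (Nat.div_dvd_of_dvd hi.1))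
    rw [sum_congr rfl this, σz]
    exact Nat.sum_div_divisors m _

end Aux

/-- For every positive integer `m`, the number of index-`m`
subgroups of `ℤ × ℤ` contained in none of `Λ₁, Λ₂, Λ₃` equals
`σ(m) − 3σ(m/2) + 2σ(m/4)` (with the convention `σ(m/k) = 0` when `k ∤ m`). -/
theorem stmt11 (m : ℕ) (hm : 0 < m) :
    (Set.ncard {Λ : AddSubgroup (ℤ × ℤ) | Λ.index = m ∧
        ∀ i : Fin 3, ¬ Λ ≤ L i} : ℤ)
      = (∑ a ∈ m.divisors, (a : ℤ))
        - 3 * (if 2 ∣ m then ∑ a ∈ (m / 2).divisors, (a : ℤ) else 0)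
        + 2 * (if 4 ∣ m then ∑ a ∈ (m / 4).divisors, (a : ℤ) else 0) := by
  classical
  set A : Finset (ℕ × ℕ) :=
    (Nat.divisorsAntidiagonal m).filter (fun p => ¬ 2 ∣ p.1 ∧ ¬ 2 ∣ p.2) with hAdef
  set T : Finset (ℕ × ℕ × ℕ) :=
    A.biUnion (fun p => (Finset.range p.2).image (fun b => (p.1, b, p.2))) with hTdef
  have hTmem : ∀ t ∈ T, 0 < t.1 ∧ 0 < t.2.2 ∧ t.2.1 < t.2.2 ∧ t.1 * t.2.2 = m
      ∧ ¬ 2 ∣ t.1 ∧ ¬ 2 ∣ t.2.2 := by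
    intro t ht
    rw [hTdef, Finset.mem_biUnion] at ht
    obtain ⟨p, hp, himg⟩ := ht
    rw [Finset.mem_image] at himg
    obtain ⟨b', hb', rfl⟩ := himg
    rw [hAdef, Finset.mem_filter, Nat.mem_divisorsAntidiagonal] at hp
    obtain ⟨⟨hmul, hm0⟩, hodd1, hodd2⟩ := hp
    rw [Finset.mem_range] at hb'
    refine ⟨?_, ?_, hb', hmul, hodd1, hodd2⟩
    · rcases Nat.eq_zero_or_pos p.1 with h | h
      · exfalso; rw [h, zero_mul] at hmul; exact hm0 hmul.symm
      · exact h
    · rcases Nat.eq_zero_or_pos p.2 with h | h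
      · exfalso; rw [h, mul_zero] at hmul; exact hm0 hmul.symm
      · exact h
  have hset : {Λ : AddSubgroup (ℤ × ℤ) | Λ.index = m ∧ ∀ i : Fin 3, ¬ Λ ≤ L i}
      = (fun t : ℕ × ℕ × ℕ => Hsub t.1 t.2.1 t.2.2) '' ↑T := by
    ext Λ
    simp only [Set.mem_setOf_eq, Set.mem_image, Finset.mem_coe]
    constructor
    · rintro ⟨hidx, hcond⟩
      obtain ⟨a, d, b, ha, hd, hb0, hbd, rfl⟩ := classify m hm _ hidx
      have had : a * d = m := by rw [← hidx, Hsub_index a d b ha hd]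
      have hcond' := (cond_iff a b d).mp hcond
      have hA : ¬ 2 ∣ a := fun h => hcond'.1 (by exact_mod_cast h)
      have hD : ¬ 2 ∣ d := fun h => hcond'.2 (by exact_mod_cast h)
      refine ⟨(a, b.toNat, d), ?_, ?_⟩
      · rw [hTdef, Finset.mem_biUnion]
        refine ⟨(a, d), ?_, ?_⟩
        · rw [hAdef, Finset.mem_filter, Nat.mem_divisorsAntidiagonal]
          exact ⟨⟨had, hm.ne'⟩, hA, hD⟩
        · rw [Finset.mem_image]
          exact ⟨b.toNat, Finset.mem_range.mpr (by omega), rfl⟩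
      · show Hsub a (b.toNat : ℤ) d = Hsub a b d
        rw [Int.toNat_of_nonneg hb0]
    · rintro ⟨⟨a, b, d⟩, hmem, rfl⟩
      obtain ⟨ha, hd, hbd, hmul, hodd1, hodd2⟩ := hTmem _ hmem
      constructor
      · rw [Hsub_index a d b ha hd]; exact hmul
      · refine (cond_iff a b d).mpr ⟨?_, ?_⟩
        · exact fun h => hodd1 (by exact_mod_cast h)
        · exact fun h => hodd2 (by exact_mod_cast h)
  have hinj : Set.InjOn (fun t : ℕ × ℕ × ℕ => Hsub t.1 t.2.1 t.2.2) ↑T := by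
    rintro ⟨a, b, d⟩ h1 ⟨a', b', d'⟩ h2 heq
    obtain ⟨ha, hd, hbd, -, -, -⟩ := hTmem _ h1
    obtain ⟨ha', hd', hbd', -, -, -⟩ := hTmem _ h2
    obtain ⟨e1, e2, e3⟩ := Hsub_inj ha ha' hd hd' (Int.natCast_nonneg b)
      (by exact_mod_cast hbd) (Int.natCast_nonneg b') (by exact_mod_cast hbd') heq
    have e2' : b = b' := by exact_mod_cast e2
    simp only [Prod.mk.injEq]
    exact ⟨e1, e2', e3⟩
  have hcardT : T.card = ∑ p ∈ A, p.2 := by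
    rw [hTdef, Finset.card_biUnion]
    · apply Finset.sum_congr rfl
      intro p _
      rw [Finset.card_image_of_injective _ (fun x y h => by
        simpa using congrArg (fun t : ℕ × ℕ × ℕ => t.2.1) h), Finset.card_range]
    · rintro p hp q hq hpq
      simp only [Function.onFun]; rw [Finset.disjoint_left]
      rintro t ht1 ht2
      rw [Finset.mem_image] at ht1 ht2
      obtain ⟨x, -, rfl⟩ := ht1
      obtain ⟨y, -, hy⟩ := ht2
      apply hpq
      have h1 := congrArg (fun t : ℕ × ℕ × ℕ => t.1) hy
      have h3 := congrArg (fun t : ℕ × ℕ × ℕ => t.2.2) hy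
      simp only at h1 h3
      exact Prod.ext h1.symm h3.symm
  rw [hset, Set.ncard_image_of_injOn hinj, Set.ncard_coe_finset, hcardT]
  have hlhs : ((∑ p ∈ A, p.2 : ℕ) : ℤ) = ∑ p ∈ A, ((p.2 : ℤ)) := by push_cast; rfl
  rw [hlhs, hAdef, count_eval m, ← rhs_eval m hm.ne']
  simp only [σz]
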